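/- arXiv:1401.6882 — 5 statements merged into one kernel-verified Lean document; each statement's English description precedes it below -/
import Mathlib

section
/- Let R : ℝ^m → ℝ be C² on the open Euclidean ball U of radius δ around a minimizer θ⋆, with second partial derivatives bounded by κ₁ on U, and Hessian positive definite at θ⋆ with smallest eigenvalue λ_min. Then for δ > 0 small enough, for all θ ∈ U, √(R(θ) − R(θ⋆)) ≤ (2√(m κ₁)/λ_min)·‖∇R(θ) − ∇R(θ⋆)‖₂. -/
open Metric RealInnerProductSpace

section Aux
open InnerProductSpace Finset

lemma aux_grad_eq {m : ℕ} (R : EuclideanSpace ℝ (Fin m) → ℝ) :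
    gradient R = ((toDual ℝ (EuclideanSpace ℝ (Fin m))).symm :
      StrongDual ℝ (EuclideanSpace ℝ (Fin m)) → EuclideanSpace ℝ (Fin m)) ∘ (fderiv ℝ R) := rfl

lemma aux_bridge {m : ℕ} (R : EuclideanSpace ℝ (Fin m) → ℝ) (x : EuclideanSpace ℝ (Fin m))
    (v w : EuclideanSpace ℝ (Fin m)) :
    ⟪fderiv ℝ (gradient R) x v, w⟫ = iteratedFDeriv ℝ 2 R x ![v, w] := by
  rw [iteratedFDeriv_two_apply, aux_grad_eq R,
    LinearIsometryEquiv.comp_fderiv (toDual ℝ (EuclideanSpace ℝ (Fin m))).symm]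
  simp only [ContinuousLinearMap.coe_comp', Function.comp_apply, LinearIsometryEquiv.coe_coe,
    Matrix.cons_val_zero, Matrix.cons_val_one, Matrix.head_cons]
  exact InnerProductSpace.toDual_symm_apply

lemma aux_quad {m : ℕ} (κ₁ : ℝ)
    (A : EuclideanSpace ℝ (Fin m) →L[ℝ] EuclideanSpace ℝ (Fin m)) (hκ : 0 ≤ κ₁)
    (hA : ∀ i j : Fin m, |(A (EuclideanSpace.single j (1:ℝ))) i| ≤ κ₁)
    (v : EuclideanSpace ℝ (Fin m)) :
    ⟪v, A v⟫ ≤ (m : ℝ) * κ₁ * ‖v‖ ^ 2 := by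
  have hv : v = ∑ j : Fin m, v j • EuclideanSpace.single j (1:ℝ) := by
    ext i
    rw [show (∑ j : Fin m, v j • EuclideanSpace.single j (1:ℝ)) i
        = ∑ j : Fin m, (v j • EuclideanSpace.single j (1:ℝ)) i from by rw [WithLp.ofLp_sum, Finset.sum_apply]]
    simp [EuclideanSpace.single_apply]
  have hAv : ∀ i, (A v) i = ∑ j : Fin m, v j * (A (EuclideanSpace.single j (1:ℝ))) i := by
    intro i
    conv_lhs => rw [hv]
    rw [map_sum]
    simp only [map_smul]
    rw [show (∑ j : Fin m, v j • A (EuclideanSpace.single j (1:ℝ))) i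
        = ∑ j : Fin m, (v j • A (EuclideanSpace.single j (1:ℝ))) i from by rw [WithLp.ofLp_sum, Finset.sum_apply]]
    simp
  have h1 : ⟪v, A v⟫ = ∑ i : Fin m, ∑ j : Fin m,
      v i * (v j * (A (EuclideanSpace.single j (1:ℝ))) i) := by
    simp [PiLp.inner_apply, RCLike.inner_apply, hAv, Finset.mul_sum]
    simp only [Finset.sum_mul]
    exact Finset.sum_congr rfl fun i _ => Finset.sum_congr rfl fun j _ => by ring
  have h2 : ⟪v, A v⟫ ≤ ∑ i : Fin m, ∑ j : Fin m, |v i| * |v j| * κ₁ := by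
    rw [h1]
    refine Finset.sum_le_sum fun i _ => Finset.sum_le_sum fun j _ => ?_
    calc v i * (v j * (A (EuclideanSpace.single j (1:ℝ))) i)
        ≤ |v i * (v j * (A (EuclideanSpace.single j (1:ℝ))) i)| := le_abs_self _
      _ = |v i| * |v j| * |(A (EuclideanSpace.single j (1:ℝ))) i| := by
          rw [abs_mul, abs_mul]; ring
      _ ≤ |v i| * |v j| * κ₁ := by
          have := hA i j
          have h0 : (0:ℝ) ≤ |v i| * |v j| := by positivity
          nlinarith [abs_nonneg ((A (EuclideanSpace.single j (1:ℝ))) i)]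
  have h3 : ∑ i : Fin m, ∑ j : Fin m, |v i| * |v j| * κ₁
      = κ₁ * (∑ i : Fin m, |v i|) ^ 2 := by
    rw [sq, Finset.sum_mul_sum]
    rw [Finset.mul_sum]
    exact Finset.sum_congr rfl fun i _ => by
      rw [Finset.mul_sum]; exact Finset.sum_congr rfl fun j _ => by ring
  have h4 : (∑ i : Fin m, |v i|) ^ 2 ≤ (m : ℝ) * ∑ i : Fin m, |v i| ^ 2 := by
    have := sq_sum_le_card_mul_sum_sq (s := (Finset.univ : Finset (Fin m))) (f := fun i => |v i|)
    simpa using this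
  have h5 : ‖v‖ ^ 2 = ∑ i : Fin m, |v i| ^ 2 := by
    rw [EuclideanSpace.norm_eq, Real.sq_sqrt (by positivity)]
    simp [Real.norm_eq_abs]
  calc ⟪v, A v⟫ ≤ κ₁ * (∑ i : Fin m, |v i|) ^ 2 := by rw [← h3]; exact h2
    _ ≤ κ₁ * ((m : ℝ) * ∑ i : Fin m, |v i| ^ 2) := mul_le_mul_of_nonneg_left h4 hκ
    _ = (m : ℝ) * κ₁ * ‖v‖ ^ 2 := by rw [h5]; ring

end Aux

set_option maxHeartbeats 2000000

/-- Lemma 1 of the paper: the gradient excess risk controls the square root of the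
excess risk. If `R` is C² on the ball of radius `δ` around a minimizer `θs` with second
partial derivatives bounded by `κ₁` and positive definite Hessian at `θs` with smallest
eigenvalue (at least) `λmin`, then for a small enough radius `δ' ≤ δ`,
`√(R θ - R θs) ≤ (2√(m κ₁)/λmin) ‖∇R θ - ∇R θs‖` on the ball of radius `δ'`. -/
theorem stmt_2 (m : ℕ) (hm : 1 ≤ m)
    (R : EuclideanSpace ℝ (Fin m) → ℝ) (θs : EuclideanSpace ℝ (Fin m))
    (δ κ₁ lammin : ℝ) (hδ : 0 < δ) (hκ : 0 < κ₁) (hlam : 0 < lammin)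
    (hmin : ∀ θ, R θs ≤ R θ)
    (hC2 : ContDiffOn ℝ 2 R (ball θs δ))
    (hbound : ∀ θ ∈ ball θs δ, ∀ i j : Fin m,
      |iteratedFDeriv ℝ 2 R θ
        ![EuclideanSpace.single i (1:ℝ), EuclideanSpace.single j (1:ℝ)]| ≤ κ₁)
    (hHess : ∀ v : EuclideanSpace ℝ (Fin m),
      lammin * ‖v‖ ^ 2 ≤ ⟪v, fderiv ℝ (gradient R) θs v⟫) :
    ∃ δ' : ℝ, 0 < δ' ∧ δ' ≤ δ ∧ ∀ θ ∈ ball θs δ',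
      Real.sqrt (R θ - R θs) ≤
        (2 * Real.sqrt ((m : ℝ) * κ₁) / lammin) *
          ‖gradient R θ - gradient R θs‖ := by
  have hθsball : θs ∈ ball θs δ := mem_ball_self hδ
  have hC2at : ∀ x ∈ ball θs δ, ContDiffAt ℝ 2 R x :=
    fun x hx => hC2.contDiffAt (isOpen_ball.mem_nhds hx)
  have hRdiff : ∀ x ∈ ball θs δ, DifferentiableAt ℝ R x :=
    fun x hx => (hC2at x hx).differentiableAt (by norm_num)
  have hgradC1 : ∀ x ∈ ball θs δ, ContDiffAt ℝ 1 (gradient R) x := by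
    intro x hx
    rw [aux_grad_eq R]
    have h1 : ContDiffAt ℝ 1 (fderiv ℝ R) x := (hC2at x hx).fderiv_right (m := 1) (by norm_num)
    exact ContDiff.comp_contDiffAt x
      ((InnerProductSpace.toDual ℝ (EuclideanSpace ℝ (Fin m))).symm.contDiff) h1
  have hgraddiff : ∀ x ∈ ball θs δ, DifferentiableAt ℝ (gradient R) x :=
    fun x hx => (hgradC1 x hx).differentiableAt one_ne_zero
  have hgrad0 : gradient R θs = 0 := by
    have hloc : IsLocalMin R θs := Filter.Eventually.of_forall fun x => hmin x
    have hf0 : fderiv ℝ R θs = 0 := hloc.fderiv_eq_zero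
    show (InnerProductSpace.toDual ℝ (EuclideanSpace ℝ (Fin m))).symm (fderiv ℝ R θs) = 0
    rw [hf0]; simp
  have hquad : ∀ x ∈ ball θs δ, ∀ v : EuclideanSpace ℝ (Fin m),
      ⟪v, fderiv ℝ (gradient R) x v⟫ ≤ (m : ℝ) * κ₁ * ‖v‖ ^ 2 := by
    intro x hx v
    refine aux_quad κ₁ (fderiv ℝ (gradient R) x) hκ.le (fun i j => ?_) v
    have h := hbound x hx j i
    rw [← aux_bridge R x] at h
    have hcoord : (fderiv ℝ (gradient R) x (EuclideanSpace.single j (1:ℝ))) i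
        = ⟪fderiv ℝ (gradient R) x (EuclideanSpace.single j (1:ℝ)),
            EuclideanSpace.single i (1:ℝ)⟫ := by
      rw [EuclideanSpace.inner_single_right]
      simp
    rw [hcoord]
    exact h
  have hHcont : ContinuousAt (fderiv ℝ (gradient R)) θs :=
    ((hgradC1 θs hθsball).fderiv_right (m := 0) (by norm_num)).continuousAt
  obtain ⟨δ₁, hδ₁pos, hδ₁p⟩ := Metric.continuousAt_iff.mp hHcont (lammin / 2) (by positivity)
  refine ⟨min δ δ₁, lt_min hδ hδ₁pos, min_le_left _ _, ?_⟩
  intro θ hθ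
  have hθδ : θ ∈ ball θs δ := mem_ball.mpr (lt_of_lt_of_le (mem_ball.mp hθ) (min_le_left _ _))
  by_cases hne : θ = θs
  · subst hne
    simp
  obtain ⟨u, hu⟩ : ∃ u, u = θ - θs := ⟨_, rfl⟩
  have hunz : u ≠ 0 := hu ▸ sub_ne_zero.mpr hne
  have hunormpos : 0 < ‖u‖ := norm_pos_iff.mpr hunz
  have hunorm : ‖u‖ < min δ δ₁ := by rw [hu]; rwa [mem_ball_iff_norm] at hθ
  obtain ⟨γ, hγ⟩ : ∃ γ : ℝ → EuclideanSpace ℝ (Fin m), γ = fun t => θs + t • u := ⟨_, rfl⟩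
  have hγnorm : ∀ t ∈ Set.Icc (0:ℝ) 1, ‖γ t - θs‖ ≤ ‖u‖ := by
    intro t ht
    have h1 : γ t - θs = t • u := by simp [hγ]
    rw [h1, norm_smul, Real.norm_eq_abs, abs_of_nonneg ht.1]
    nlinarith [ht.2, hunormpos]
  have hγmem : ∀ t ∈ Set.Icc (0:ℝ) 1, γ t ∈ ball θs δ := by
    intro t ht
    rw [mem_ball_iff_norm]
    exact lt_of_le_of_lt (hγnorm t ht) (lt_of_lt_of_le hunorm (min_le_left _ _))
  have hγd : ∀ t : ℝ, HasDerivAt γ u t := by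
    intro t
    rw [hγ]
    simpa using ((hasDerivAt_id t).smul_const u).const_add θs
  have hγ0 : γ 0 = θs := by simp [hγ]
  have hγ1 : γ 1 = θ := by simp [hγ, hu]
  have hgd : ∀ t ∈ Set.Icc (0:ℝ) 1,
      HasDerivAt (fun t => R (γ t)) (⟪u, gradient R (γ t)⟫) t := by
    intro t ht
    have h1 : HasDerivAt (fun t => R (γ t)) (fderiv ℝ R (γ t) u) t :=
      (hRdiff _ (hγmem t ht)).hasFDerivAt.comp_hasDerivAt t (hγd t)
    have h2 : fderiv ℝ R (γ t) u = ⟪u, gradient R (γ t)⟫ := by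
      rw [real_inner_comm]
      exact (InnerProductSpace.toDual_symm_apply).symm
    rwa [h2] at h1
  obtain ⟨φ, hφ⟩ : ∃ φ : ℝ → ℝ, φ = fun t => ⟪u, gradient R (γ t)⟫ := ⟨_, rfl⟩
  obtain ⟨ψ, hψ⟩ : ∃ ψ : ℝ → ℝ, ψ = fun t => ⟪u, fderiv ℝ (gradient R) (γ t) u⟫ := ⟨_, rfl⟩
  have hφd : ∀ t ∈ Set.Icc (0:ℝ) 1, HasDerivAt φ (ψ t) t := by
    intro t ht
    rw [hφ, hψ]
    have h1 : HasDerivAt (fun t => gradient R (γ t)) (fderiv ℝ (gradient R) (γ t) u) t :=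
      (hgraddiff _ (hγmem t ht)).hasFDerivAt.comp_hasDerivAt t (hγd t)
    have h2 := (innerSL ℝ u).hasFDerivAt.comp_hasDerivAt t h1
    simpa only [innerSL_apply_apply, Function.comp_def] using h2
  have hφ0 : φ 0 = 0 := by rw [hφ]; simp only [hγ0, hgrad0, inner_zero_right]
  -- Part B : lower bound on the gradient norm
  obtain ⟨c₃, hc₃, hc₃eq⟩ := exists_hasDerivAt_eq_slope φ ψ one_pos
    (fun t ht => (hφd t ht).continuousAt.continuousWithinAt)
    (fun t ht => hφd t ⟨ht.1.le, ht.2.le⟩)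
  have hc₃Icc : c₃ ∈ Set.Icc (0:ℝ) 1 := ⟨hc₃.1.le, hc₃.2.le⟩
  have hHnear : ‖fderiv ℝ (gradient R) (γ c₃) - fderiv ℝ (gradient R) θs‖ < lammin / 2 := by
    rw [← dist_eq_norm]
    refine hδ₁p ?_
    rw [dist_eq_norm]
    exact lt_of_le_of_lt (hγnorm c₃ hc₃Icc) (lt_of_lt_of_le hunorm (min_le_right _ _))
  have hlow : lammin / 2 * ‖u‖ ^ 2 ≤ ψ c₃ := by
    have h1 := hHess u
    have h2 : |⟪u, (fderiv ℝ (gradient R) (γ c₃) - fderiv ℝ (gradient R) θs) u⟫|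
        ≤ lammin / 2 * ‖u‖ ^ 2 := by
      calc |⟪u, (fderiv ℝ (gradient R) (γ c₃) - fderiv ℝ (gradient R) θs) u⟫|
          ≤ ‖u‖ * ‖(fderiv ℝ (gradient R) (γ c₃) - fderiv ℝ (gradient R) θs) u‖ :=
            abs_real_inner_le_norm _ _
        _ ≤ ‖u‖ * (‖fderiv ℝ (gradient R) (γ c₃) - fderiv ℝ (gradient R) θs‖ * ‖u‖) := by
            gcongr
            exact ContinuousLinearMap.le_opNorm _ _
        _ ≤ ‖u‖ * (lammin / 2 * ‖u‖) := by gcongr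
        _ = lammin / 2 * ‖u‖ ^ 2 := by ring
    have h3 : ψ c₃ = ⟪u, fderiv ℝ (gradient R) θs u⟫
        + ⟪u, (fderiv ℝ (gradient R) (γ c₃) - fderiv ℝ (gradient R) θs) u⟫ := by
      have hvec : fderiv ℝ (gradient R) (γ c₃) u = fderiv ℝ (gradient R) θs u
          + (fderiv ℝ (gradient R) (γ c₃) - fderiv ℝ (gradient R) θs) u := by
        rw [ContinuousLinearMap.sub_apply]; abel
      rw [hψ, ← inner_add_right]
      exact congrArg (fun w => (⟪u, w⟫ : ℝ)) hvec
    have h4 := (abs_le.mp h2).1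
    rw [h3]
    linarith
  have hslope : ψ c₃ = φ 1 := by
    rw [hc₃eq, hφ0]
    ring
  have hφ1 : φ 1 = ⟪u, gradient R θ - gradient R θs⟫ := by
    simp [hφ, hγ1, hgrad0]
  have hkey : ‖u‖ ≤ 2 / lammin * ‖gradient R θ - gradient R θs‖ := by
    have h5 : lammin / 2 * ‖u‖ ^ 2 ≤ ‖u‖ * ‖gradient R θ - gradient R θs‖ := by
      calc lammin / 2 * ‖u‖ ^ 2 ≤ ψ c₃ := hlow
        _ = ⟪u, gradient R θ - gradient R θs⟫ := by rw [hslope, hφ1]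
        _ ≤ ‖u‖ * ‖gradient R θ - gradient R θs‖ := real_inner_le_norm _ _
    have h6 : (lammin * ‖u‖) * ‖u‖ ≤ (2 * ‖gradient R θ - gradient R θs‖) * ‖u‖ := by
      nlinarith
    have h7 : lammin * ‖u‖ ≤ 2 * ‖gradient R θ - gradient R θs‖ :=
      le_of_mul_le_mul_right h6 hunormpos
    rw [div_mul_eq_mul_div, le_div_iff₀ hlam]
    linarith [h7]
  -- Part A : upper bound on the excess risk
  obtain ⟨c, hc, hceq⟩ := exists_hasDerivAt_eq_slope (fun t => R (γ t)) φ one_pos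
    (fun t ht => (hgd t ht).continuousAt.continuousWithinAt)
    (fun t ht => by rw [hφ]; exact hgd t ⟨ht.1.le, ht.2.le⟩)
  obtain ⟨c₂, hc₂, hc₂eq⟩ := exists_hasDerivAt_eq_slope φ ψ hc.1
    (fun t ht => (hφd t ⟨ht.1, ht.2.trans hc.2.le⟩).continuousAt.continuousWithinAt)
    (fun t ht => hφd t ⟨ht.1.le, ht.2.le.trans hc.2.le⟩)
  have hub : R θ - R θs ≤ (m : ℝ) * κ₁ * ‖u‖ ^ 2 := by
    have hψb := hquad (γ c₂) (hγmem c₂ ⟨hc₂.1.le, hc₂.2.le.trans hc.2.le⟩) u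
    have hφc : φ c = R θ - R θs := by
      rw [hceq]
      rw [hγ1, hγ0]
      ring
    have hcne : c ≠ 0 := ne_of_gt hc.1
    have hφc2 : φ c = c * ψ c₂ := by
      rw [hc₂eq, hφ0, sub_zero, sub_zero, mul_div_cancel₀ _ hcne]
    have hψb' : ψ c₂ ≤ (m : ℝ) * κ₁ * ‖u‖ ^ 2 := by rw [hψ]; exact hψb
    have hmk : 0 ≤ (m : ℝ) * κ₁ * ‖u‖ ^ 2 := by positivity
    have key : ∀ cc bb KK : ℝ, 0 < cc → cc < 1 → bb ≤ KK → 0 ≤ KK → cc * bb ≤ KK := by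
      intro cc bb KK h1 h2 h3 h4
      rcases le_or_gt bb 0 with h | h
      · nlinarith
      · nlinarith
    rw [← hφc, hφc2]
    exact key c (ψ c₂) _ hc.1 hc.2 hψb' hmk
  have hRpos : 0 ≤ R θ - R θs := sub_nonneg.mpr (hmin θ)
  calc Real.sqrt (R θ - R θs) ≤ Real.sqrt ((m : ℝ) * κ₁ * ‖u‖ ^ 2) := Real.sqrt_le_sqrt hub
    _ = Real.sqrt ((m : ℝ) * κ₁) * ‖u‖ := by
        rw [Real.sqrt_mul (by positivity), Real.sqrt_sq (norm_nonneg _)]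
    _ ≤ Real.sqrt ((m : ℝ) * κ₁) * (2 / lammin * ‖gradient R θ - gradient R θs‖) :=
        mul_le_mul_of_nonneg_left hkey (Real.sqrt_nonneg _)
    _ = (2 * Real.sqrt ((m : ℝ) * κ₁) / lammin) * ‖gradient R θ - gradient R θs‖ := by ring
end

section
/- (Lemma 4, robust regression) Let ρ_γ be the Huber loss, ξ a real random variable with symmetric density, and define the local risk derivative G(t) = −E ρ_γ'(ξ + f⋆ − t) for t ∈ ℝ, where f⋆ ∈ ℝ is fixed (so G(f⋆) = 0). Let κ := E ρ_γ''(ξ) > 0 and assume the map u ↦ E ρ_γ''(ξ + u) is 2-Lipschitz. Then for any t with |t − f⋆| ≤ κ/4, one has |t − f⋆| ≤ (2/κ)·|G(t) − G(f⋆)|. -/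
open MeasureTheory

/-- The derivative of the Huber loss of scale `γ`. -/
noncomputable def huberDeriv (γ z : ℝ) : ℝ :=
  if |z| ≤ γ then z else γ * Real.sign z

/-- The (a.e.) second derivative of the Huber loss of scale `γ`. -/
noncomputable def huberDeriv2 (γ z : ℝ) : ℝ :=
  if |z| < γ then 1 else 0

lemma huberDeriv_eq_clamp {γ : ℝ} (hγ : 0 < γ) (z : ℝ) :
    huberDeriv γ z = max (-γ) (min z γ) := by
  unfold huberDeriv
  split_ifs with h
  · rw [abs_le] at h
    rw [min_eq_left h.2, max_eq_right h.1]
  · push_neg at h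
    rcases lt_or_ge γ z with h1 | h1
    · rw [Real.sign_of_pos (lt_trans hγ h1), min_eq_right h1.le,
        max_eq_right (by linarith)]
      ring
    · have h2 : z < -γ := by
        rcases abs_cases z with ⟨e, _⟩ | ⟨e, _⟩ <;> linarith
      rw [Real.sign_of_neg (by linarith), min_eq_left (by linarith),
        max_eq_left h2.le]
      ring

lemma measurable_huberDeriv (γ : ℝ) : Measurable (huberDeriv γ) := by
  unfold huberDeriv Real.sign
  apply Measurable.ite (measurableSet_le (by measurability) measurable_const) measurable_id
  apply Measurable.mul measurable_const
  apply Measurable.ite (measurableSet_lt measurable_id measurable_const) measurable_const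
  exact Measurable.ite (measurableSet_lt measurable_const measurable_id) measurable_const
    measurable_const

lemma measurable_huberDeriv2 (γ : ℝ) : Measurable (huberDeriv2 γ) := by
  unfold huberDeriv2
  exact Measurable.ite (measurableSet_lt (by measurability) measurable_const)
    measurable_const measurable_const

lemma abs_huberDeriv_le {γ : ℝ} (hγ : 0 < γ) (z : ℝ) : |huberDeriv γ z| ≤ γ := by
  rw [huberDeriv_eq_clamp hγ, abs_le]
  constructor
  · exact le_max_left _ _
  · exact max_le (by linarith) (min_le_right _ _)

lemma abs_huberDeriv2_le (γ z : ℝ) : |huberDeriv2 γ z| ≤ 1 := by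
  unfold huberDeriv2; split_ifs <;> simp

lemma vol_inter (a b c d : ℝ) :
    MeasureTheory.volume (Set.Ioo a b ∩ Set.Ioc c d) = ENNReal.ofReal (min b d - max a c) := by
  apply le_antisymm
  · calc MeasureTheory.volume (Set.Ioo a b ∩ Set.Ioc c d)
        ≤ MeasureTheory.volume (Set.Ioc (max a c) (min b d)) := by
          apply measure_mono
          rintro x ⟨⟨h1, h2⟩, h3, h4⟩
          exact ⟨max_lt h1 h3, le_min h2.le h4⟩
      _ = ENNReal.ofReal (min b d - max a c) := Real.volume_Ioc
  · calc ENNReal.ofReal (min b d - max a c)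
        = MeasureTheory.volume (Set.Ioo (max a c) (min b d)) := Real.volume_Ioo.symm
      _ ≤ MeasureTheory.volume (Set.Ioo a b ∩ Set.Ioc c d) := by
          apply measure_mono
          rintro x ⟨h1, h2⟩
          exact ⟨⟨lt_of_le_of_lt (le_max_left _ _) h1, lt_of_lt_of_le h2 (min_le_left _ _)⟩,
            lt_of_le_of_lt (le_max_right _ _) h1, le_trans h2.le (min_le_right _ _)⟩

lemma clamp_key {γ : ℝ} (hγ : 0 < γ) (z v : ℝ) (hv : 0 ≤ v) :
    max (-γ) (min (z + v) γ) - max (-γ) (min z γ)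
      = max (min (γ - z) v - max (-γ - z) 0) 0 := by
  simp only [max_def, min_def]
  split_ifs <;> linarith

lemma huberDeriv_sub_eq {γ : ℝ} (hγ : 0 < γ) (z v : ℝ) (hv : 0 ≤ v) :
    huberDeriv γ (z + v) - huberDeriv γ z
      = ∫ s in Set.Ioc (0 : ℝ) v, huberDeriv2 γ (z + s) := by
  have hind : (fun s => huberDeriv2 γ (z + s))
      = Set.indicator (Set.Ioo (-γ - z) (γ - z)) (fun _ => (1 : ℝ)) := by
    funext s
    unfold huberDeriv2
    rw [Set.indicator_apply]
    congr 1
    simp only [Set.mem_Ioo, eq_iff_iff, abs_lt]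
    constructor <;> rintro ⟨h1, h2⟩ <;> constructor <;> linarith
  rw [hind, MeasureTheory.setIntegral_indicator measurableSet_Ioo,
    MeasureTheory.setIntegral_const, smul_eq_mul, mul_one, Set.inter_comm,
    measureReal_def, vol_inter, ENNReal.toReal_ofReal', huberDeriv_eq_clamp hγ, huberDeriv_eq_clamp hγ,
    clamp_key hγ z v hv]

/-- Lemma 4 of the paper (robust regression). With
`G t = -E ρ_γ'(ξ + f⋆ - t)`, `κ = E ρ_γ''(ξ) > 0`, and `u ↦ E ρ_γ''(ξ + u)`
2-Lipschitz, any `t` with `|t - f⋆| ≤ κ/4` satisfies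
`|t - f⋆| ≤ (2/κ) |G t - G f⋆|`. -/
theorem stmt_11 {Ω : Type*} [MeasurableSpace Ω] (P : Measure Ω) [IsProbabilityMeasure P]
    (ξ : Ω → ℝ) (hξ : Measurable ξ) (g : ℝ → ℝ) (hg : Measurable g) (hg0 : ∀ x, 0 ≤ g x)
    (hdens : Measure.map ξ P = MeasureTheory.volume.withDensity fun x => ENNReal.ofReal (g x))
    (hsym : ∀ x, g (-x) = g x)
    (γ : ℝ) (hγ : 0 < γ) (fstar : ℝ)
    (G : ℝ → ℝ) (hG : ∀ t, G t = -∫ ω, huberDeriv γ (ξ ω + fstar - t) ∂P)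
    (κ : ℝ) (hκdef : κ = ∫ ω, huberDeriv2 γ (ξ ω) ∂P) (hκpos : 0 < κ)
    (hLip : LipschitzWith 2 (fun u : ℝ => ∫ ω, huberDeriv2 γ (ξ ω + u) ∂P)) :
    ∀ t : ℝ, |t - fstar| ≤ κ / 4 → |t - fstar| ≤ (2 / κ) * |G t - G fstar| := by
  set H : ℝ → ℝ := fun v => ∫ ω, huberDeriv γ (ξ ω + v) ∂P with hH
  set K : ℝ → ℝ := fun u => ∫ ω, huberDeriv2 γ (ξ ω + u) ∂P with hKdef
  -- integrability of first derivative composite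
  have intg1 : ∀ c : ℝ, Integrable (fun ω => huberDeriv γ (ξ ω + c)) P := by
    intro c
    apply Integrable.mono' (integrable_const γ)
    · exact ((measurable_huberDeriv γ).comp (hξ.add_const c)).aestronglyMeasurable
    · filter_upwards with ω
      simpa using abs_huberDeriv_le hγ (ξ ω + c)
  have intg2 : ∀ c : ℝ, Integrable (fun ω => huberDeriv2 γ (ξ ω + c)) P := by
    intro c
    apply Integrable.mono' (integrable_const 1)
    · exact ((measurable_huberDeriv2 γ).comp (hξ.add_const c)).aestronglyMeasurable
    · filter_upwards with ω
      simpa using abs_huberDeriv2_le γ (ξ ω + c)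
  have hK0 : K 0 = κ := by simp [hKdef, hκdef]
  have hKlb : ∀ u : ℝ, |u| ≤ κ / 4 → κ / 2 ≤ K u := by
    intro u hu
    have := hLip.dist_le_mul u 0
    rw [Real.dist_eq, Real.dist_eq, sub_zero] at this
    have h2 : |K u - K 0| ≤ 2 * |u| := this
    rw [hK0] at h2
    rcases abs_le.1 h2 with ⟨h3, _⟩
    have : |u| ≤ κ / 4 := hu
    linarith [abs_nonneg u]
  have hKabs : ∀ u : ℝ, |K u| ≤ 1 := by
    intro u
    calc |K u| = ‖∫ ω, huberDeriv2 γ (ξ ω + u) ∂P‖ := (Real.norm_eq_abs _).symm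
      _ ≤ ∫ ω, ‖huberDeriv2 γ (ξ ω + u)‖ ∂P := norm_integral_le_integral_norm _
      _ = ∫ ω, |huberDeriv2 γ (ξ ω + u)| ∂P := by simp [Real.norm_eq_abs]
      _ ≤ ∫ _ : Ω, (1 : ℝ) ∂P := by
          apply integral_mono (intg2 u).abs (integrable_const 1)
          intro ω; exact abs_huberDeriv2_le γ (ξ ω + u)
      _ = 1 := by simp
  -- main monotonicity estimate
  have main : ∀ a b : ℝ, a ≤ b → |a| ≤ κ / 4 → |b| ≤ κ / 4 →
      κ / 2 * (b - a) ≤ H b - H a := by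
    intro a b hab ha hb
    have hv : (0 : ℝ) ≤ b - a := by linarith
    haveI hfin : IsFiniteMeasure (volume.restrict (Set.Ioc (0 : ℝ) (b - a))) := by
      constructor
      rw [Measure.restrict_apply_univ, Real.volume_Ioc]
      exact ENNReal.ofReal_lt_top
    have step1 : H b - H a
        = ∫ ω, (huberDeriv γ (ξ ω + b) - huberDeriv γ (ξ ω + a)) ∂P :=
      (integral_sub (intg1 b) (intg1 a)).symm
    have step2 : ∀ ω, huberDeriv γ (ξ ω + b) - huberDeriv γ (ξ ω + a)
        = ∫ s in Set.Ioc (0 : ℝ) (b - a), huberDeriv2 γ (ξ ω + a + s) := by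
      intro ω
      have := huberDeriv_sub_eq hγ (ξ ω + a) (b - a) hv
      rw [show ξ ω + a + (b - a) = ξ ω + b by ring] at this
      exact this
    have hmeas : Measurable (Function.uncurry fun ω (s : ℝ) => huberDeriv2 γ (ξ ω + a + s)) := by
      apply (measurable_huberDeriv2 γ).comp
      exact (((hξ.comp measurable_fst).add_const a).add measurable_snd)
    have hintprod : Integrable (Function.uncurry fun ω (s : ℝ) => huberDeriv2 γ (ξ ω + a + s))
        (P.prod (volume.restrict (Set.Ioc (0 : ℝ) (b - a)))) := by
      apply Integrable.mono' (integrable_const 1) hmeas.aestronglyMeasurable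
      filter_upwards with p
      exact (Real.norm_eq_abs _).trans_le (abs_huberDeriv2_le γ (ξ p.1 + a + p.2))
    have swap : ∫ ω, (∫ s in Set.Ioc (0 : ℝ) (b - a), huberDeriv2 γ (ξ ω + a + s)) ∂P
        = ∫ s in Set.Ioc (0 : ℝ) (b - a), (∫ ω, huberDeriv2 γ (ξ ω + a + s) ∂P) := by
      exact integral_integral_swap hintprod
    have inner : ∀ s : ℝ, (∫ ω, huberDeriv2 γ (ξ ω + a + s) ∂P) = K (a + s) := by
      intro s
      simp only [hKdef]
      congr 1
      funext ω
      rw [add_assoc]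
    have intK : Integrable (fun s => K (a + s)) (volume.restrict (Set.Ioc (0 : ℝ) (b - a))) := by
      apply Integrable.mono' (integrable_const 1)
      · exact (hLip.continuous.comp (continuous_const.add continuous_id)).aestronglyMeasurable
      · filter_upwards with s
        simpa using hKabs (a + s)
    have bound : ∫ s in Set.Ioc (0 : ℝ) (b - a), (κ / 2 : ℝ)
        ≤ ∫ s in Set.Ioc (0 : ℝ) (b - a), K (a + s) := by
      apply setIntegral_mono_on (integrable_const _) intK measurableSet_Ioc
      intro s hs
      apply hKlb
      rw [abs_le]
      rcases hs with ⟨hs1, hs2⟩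
      rcases abs_le.1 ha with ⟨ha1, ha2⟩
      rcases abs_le.1 hb with ⟨hb1, hb2⟩
      constructor <;> linarith
    have vconst : ∫ s in Set.Ioc (0 : ℝ) (b - a), (κ / 2 : ℝ) = κ / 2 * (b - a) := by
      rw [setIntegral_const, smul_eq_mul, measureReal_def, Real.volume_Ioc, sub_zero,
        ENNReal.toReal_ofReal hv]
      ring
    calc κ / 2 * (b - a) = ∫ s in Set.Ioc (0 : ℝ) (b - a), (κ / 2 : ℝ) := vconst.symm
      _ ≤ ∫ s in Set.Ioc (0 : ℝ) (b - a), K (a + s) := bound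
      _ = ∫ s in Set.Ioc (0 : ℝ) (b - a), (∫ ω, huberDeriv2 γ (ξ ω + a + s) ∂P) := by
          apply setIntegral_congr_fun measurableSet_Ioc
          intro s _
          exact (inner s).symm
      _ = ∫ ω, (∫ s in Set.Ioc (0 : ℝ) (b - a), huberDeriv2 γ (ξ ω + a + s)) ∂P := swap.symm
      _ = ∫ ω, (huberDeriv γ (ξ ω + b) - huberDeriv γ (ξ ω + a)) ∂P := by
          congr 1
          funext ω
          exact (step2 ω).symm
      _ = H b - H a := step1.symm
  -- conclude
  intro t ht
  set u : ℝ := fstar - t with hu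
  have huabs : |u| = |t - fstar| := by rw [hu, abs_sub_comm]
  have hu4 : |u| ≤ κ / 4 := by rw [huabs]; exact ht
  have h04 : |(0 : ℝ)| ≤ κ / 4 := by simp; linarith
  have hGdiff : G t - G fstar = H 0 - H u := by
    rw [hG t, hG fstar]
    have e1 : (fun ω => huberDeriv γ (ξ ω + fstar - t)) = fun ω => huberDeriv γ (ξ ω + u) := by
      funext ω; rw [hu]; ring_nf
    have e2 : (fun ω => huberDeriv γ (ξ ω + fstar - fstar)) = fun ω => huberDeriv γ (ξ ω + 0) := by
      funext ω; ring_nf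
    rw [e1, e2]
    simp only [hH, add_zero]
    ring
  rcases le_total 0 u with hpos | hneg
  · have := main 0 u hpos h04 hu4
    have habs : κ / 2 * u ≤ |G t - G fstar| := by
      have : κ / 2 * (u - 0) ≤ H u - H 0 := this
      have h2 : H u - H 0 ≤ |G t - G fstar| := by
        rw [hGdiff]
        calc H u - H 0 ≤ |H u - H 0| := le_abs_self _
          _ = |H 0 - H u| := abs_sub_comm _ _
      linarith
    rw [← huabs, abs_of_nonneg hpos, div_mul_eq_mul_div, le_div_iff₀ hκpos]
    nlinarith [habs]
  · have := main u 0 hneg hu4 h04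
    have habs : κ / 2 * (-u) ≤ |G t - G fstar| := by
      have h1 : κ / 2 * (0 - u) ≤ H 0 - H u := this
      have h2 : H 0 - H u ≤ |G t - G fstar| := by
        rw [hGdiff]; exact le_abs_self _
      linarith
    rw [← huabs, abs_of_nonpos hneg, div_mul_eq_mul_div, le_div_iff₀ hκpos]
    nlinarith [habs]
end

section
/- (Bias-variance trade-off rate) For s ∈ (0,1]^d, L > 0 and constants c₁, c₂ > 0, the infimum over h ∈ (0,1]^d of c₁∑_{j=1}^d h_j^{s_j} + c₂ (n ∏_{j=1}^d h_j)^{−1/2} is attained, up to constants depending only on (d, s, c₁, c₂), at h_j ≍ n^{−\bar s/(s_j(2\bar s + 1))}, and its value is of order n^{−\bar s/(2\bar s+1)}, where \bar s = (∑_j 1/s_j)^{−1} is the harmonic mean of the s_j. In particular there exists C = C(d,s,c₁,c₂) with inf_h {c₁∑_j h_j^{s_j} + c₂(n∏_j h_j)^{−1/2}} ≤ C·n^{−\bar s/(2\bar s + 1)} for all n ≥ 1. -/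
open scoped BigOperators

/-- Anisotropic bias–variance trade-off: for `s ∈ (0,1]^d` there is a constant `C`
such that for all `n ≥ 1`,
`inf_{h ∈ (0,1]^d} {c₁ ∑_j h_j^{s_j} + c₂ (n ∏_j h_j)^{-1/2}} ≤ C n^{-s̄/(2s̄+1)}`,
where `s̄ = (∑_j 1/s_j)⁻¹` is the harmonic mean. The infimum bound is expressed by
exhibiting a bandwidth `h` achieving it. -/
theorem stmt_16 (d : ℕ) (hd : 1 ≤ d)
    (s : Fin d → ℝ) (hs : ∀ j, 0 < s j ∧ s j ≤ 1)
    (c₁ c₂ : ℝ) (hc₁ : 0 < c₁) (hc₂ : 0 < c₂) :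
    ∃ C : ℝ, 0 < C ∧ ∀ n : ℕ, 1 ≤ n →
      ∃ h : Fin d → ℝ, (∀ j, 0 < h j ∧ h j ≤ 1) ∧
        c₁ * ∑ j, h j ^ (s j) + c₂ * ((n : ℝ) * ∏ j, h j) ^ (-(1:ℝ)/2) ≤
          C * (n : ℝ) ^ (-((∑ j, 1 / s j)⁻¹ / (2 * (∑ j, 1 / s j)⁻¹ + 1))) := by
  set S : ℝ := ∑ j, 1 / s j with hS
  have hSpos : 0 < S := by
    apply Finset.sum_pos
    · intro j _
      exact one_div_pos.mpr (hs j).1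
    · exact Finset.univ_nonempty_iff.mpr ⟨⟨0, hd⟩⟩
  have hDen : 0 < 2 * S⁻¹ + 1 := by positivity
  refine ⟨c₁ * d + c₂, by positivity, fun n hn => ?_⟩
  have hn1 : (1:ℝ) ≤ (n:ℝ) := by exact_mod_cast hn
  have hnpos : (0:ℝ) < n := lt_of_lt_of_le one_pos hn1
  set e : Fin d → ℝ := fun j => -(S⁻¹ / (s j * (2 * S⁻¹ + 1))) with he
  refine ⟨fun j => (n:ℝ) ^ (e j), fun j => ⟨Real.rpow_pos_of_pos hnpos _, ?_⟩, ?_⟩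
  · apply Real.rpow_le_one_of_one_le_of_nonpos hn1
    have h1 : 0 ≤ S⁻¹ / (s j * (2 * S⁻¹ + 1)) := by
      have := (hs j).1
      positivity
    simp only [he]
    linarith
  · have key1 : ∀ j : Fin d, ((n:ℝ) ^ (e j)) ^ (s j) = (n:ℝ) ^ (-(S⁻¹ / (2 * S⁻¹ + 1))) := by
      intro j
      rw [← Real.rpow_mul hnpos.le]
      congr 1
      have hsj := (hs j).1
      simp only [he]
      field_simp
    have sumE : ∑ j, e j = -(1 / (2 * S⁻¹ + 1)) := by
      have : ∀ j : Fin d, e j = (1 / s j) * (-(S⁻¹ / (2 * S⁻¹ + 1))) := by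
        intro j
        have hsj := (hs j).1
        simp only [he]
        field_simp
      rw [Finset.sum_congr rfl (fun j _ => this j), ← Finset.sum_mul, ← hS]
      field_simp
    have key2 : ((n:ℝ) * ∏ j, (n:ℝ) ^ (e j)) ^ (-(1:ℝ)/2)
        = (n:ℝ) ^ (-(S⁻¹ / (2 * S⁻¹ + 1))) := by
      rw [← Real.rpow_sum_of_pos hnpos, sumE]
      have hmul : (n:ℝ) * (n:ℝ) ^ (-(1 / (2 * S⁻¹ + 1)))
          = (n:ℝ) ^ (1 + -(1 / (2 * S⁻¹ + 1))) := by
        rw [Real.rpow_add hnpos, Real.rpow_one]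
      rw [hmul, ← Real.rpow_mul hnpos.le]
      congr 1
      field_simp
      ring
    simp only [key1, key2, Finset.sum_const, Finset.card_univ, Fintype.card_fin,
      nsmul_eq_mul, ← hS]
    exact le_of_eq (by ring)
end

section
/- (Deconvolution bias–variance rate) For s ∈ (0,∞)^d, β ∈ (0,∞)^d and constants c₁, c₂ > 0, there exists C > 0 such that for all n ≥ 1, inf over h ∈ (0,1]^d of (c₁∑_{j=1}^d h_j^{s_j} + c₂ n^{−1/2} ∏_{j=1}^d h_j^{−β_j})² ≤ C·n^{−1/(1 + ∑_{j=1}^d β_j/s_j)}. -/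
open scoped BigOperators

/-- Deconvolution bias–variance trade-off (proof of Theorem 2): for `s, β ∈ (0,∞)^d`
there is `C > 0` such that for all `n ≥ 1`,
`inf_{h ∈ (0,1]^d} (c₁ ∑_j h_j^{s_j} + c₂ n^{-1/2} ∏_j h_j^{-β_j})² ≤ C n^{-1/(1+∑_j β_j/s_j)}`,
the infimum bound being expressed by exhibiting a bandwidth `h` achieving it. -/
theorem stmt_17 (d : ℕ) (hd : 1 ≤ d)
    (s β : Fin d → ℝ) (hs : ∀ j, 0 < s j) (hβ : ∀ j, 0 < β j)
    (c₁ c₂ : ℝ) (hc₁ : 0 < c₁) (hc₂ : 0 < c₂) :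
    ∃ C : ℝ, 0 < C ∧ ∀ n : ℕ, 1 ≤ n →
      ∃ h : Fin d → ℝ, (∀ j, 0 < h j ∧ h j ≤ 1) ∧
        (c₁ * ∑ j, h j ^ (s j) + c₂ * (n : ℝ) ^ (-(1:ℝ)/2) * ∏ j, h j ^ (-(β j))) ^ 2 ≤
          C * (n : ℝ) ^ (-(1 / (1 + ∑ j, β j / s j))) := by
  set B := ∑ j, β j / s j with hB
  have hB0 : 0 < B :=
    Finset.sum_pos (fun j _ => div_pos (hβ j) (hs j)) ⟨⟨0, hd⟩, Finset.mem_univ _⟩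
  have h1B : 0 < 1 + B := by linarith
  set a : ℝ := 1 / (2 * (1 + B)) with ha
  have ha0 : 0 < a := by positivity
  refine ⟨(c₁ * d + c₂) ^ 2, by positivity, fun n hn => ?_⟩
  have hn0 : (0:ℝ) < n := by exact_mod_cast hn
  have hn1 : (1:ℝ) ≤ n := by exact_mod_cast hn
  refine ⟨fun j => (n : ℝ) ^ (-(a / s j)), fun j =>
    ⟨Real.rpow_pos_of_pos hn0 _,
     Real.rpow_le_one_of_one_le_of_nonpos hn1
       (neg_nonpos.mpr (div_pos ha0 (hs j)).le)⟩, ?_⟩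
  have hbias : ∀ j : Fin d, ((n : ℝ) ^ (-(a / s j))) ^ (s j) = (n : ℝ) ^ (-a) := by
    intro j
    rw [← Real.rpow_mul hn0.le]
    congr 1
    have hsj := (hs j).ne'
    field_simp
  have hvar : ∀ j : Fin d, ((n : ℝ) ^ (-(a / s j))) ^ (-(β j))
      = (n : ℝ) ^ (a * (β j / s j)) := by
    intro j
    rw [← Real.rpow_mul hn0.le]
    congr 1
    have hsj := (hs j).ne'
    field_simp
  have hprod : (∏ j, ((n : ℝ) ^ (-(a / s j))) ^ (-(β j))) = (n : ℝ) ^ (a * B) := by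
    simp only [hvar]
    rw [← Real.rpow_sum_of_pos hn0, ← Finset.mul_sum]
  have hsum : (∑ j, ((n : ℝ) ^ (-(a / s j))) ^ (s j)) = d * (n : ℝ) ^ (-a) := by
    simp only [hbias]
    rw [Finset.sum_const, Finset.card_univ, Fintype.card_fin, nsmul_eq_mul]
  have hvar2 : (n : ℝ) ^ (-(1:ℝ)/2) * (n : ℝ) ^ (a * B) = (n : ℝ) ^ (-a) := by
    rw [← Real.rpow_add hn0]
    congr 1
    rw [ha]
    field_simp
    ring
  rw [hsum, hprod, mul_assoc, hvar2]
  have key : (c₁ * (↑d * (n : ℝ) ^ (-a)) + c₂ * (n : ℝ) ^ (-a))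
      = (c₁ * d + c₂) * (n : ℝ) ^ (-a) := by ring
  rw [key, mul_pow, ← Real.rpow_natCast ((n:ℝ) ^ (-a)) 2, ← Real.rpow_mul hn0.le]
  have : -a * (2:ℕ) = -(1 / (1 + B)) := by
    rw [ha]; push_cast; field_simp
  rw [this]
end

section
/- (Distortion gradient) Let P be a probability measure on ℝ^d with E‖X‖₂² < ∞ and continuous density, and for a codebook c = (c₁,…,c_k) ∈ (ℝ^d)^k with distinct centers define the distortion R(c) = E min_{j≤k} ‖X − c_j‖₂². Then R is differentiable at c and ∂R/∂c_j = −2 ∫_{V_j(c)} (x − c_j) f(x) dx, where V_j(c) = {x : ‖x − c_j‖₂ < ‖x − c_u‖₂ for all u ≠ j} is the open Voronoi cell of c_j. -/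
open MeasureTheory RealInnerProductSpace

section aux
variable {d k : ℕ}

private lemma bisector_null (a b : EuclideanSpace ℝ (Fin d)) (hab : a ≠ b) :
    volume {x : EuclideanSpace ℝ (Fin d) | dist x a = dist x b} = 0 := by
  set w : EuclideanSpace ℝ (Fin d) := b - a with hw
  have hw0 : w ≠ 0 := sub_ne_zero.mpr (Ne.symm hab)
  set r : ℝ := (‖b‖ ^ 2 - ‖a‖ ^ 2) / 2 with hr
  set x₀ : EuclideanSpace ℝ (Fin d) := (r / ⟪w, w⟫) • w with hx₀
  set K : Submodule ℝ (EuclideanSpace ℝ (Fin d)) := (ℝ ∙ w)ᗮ with hK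
  have hKtop : K ≠ ⊤ := by
    intro h
    have : w ∈ K := h ▸ Submodule.mem_top
    rw [hK, Submodule.mem_orthogonal_singleton_iff_inner_right] at this
    exact hw0 (inner_self_eq_zero.mp this)
  have hsub : {x : EuclideanSpace ℝ (Fin d) | dist x a = dist x b} ⊆
      (fun x => x + (-x₀)) ⁻¹' (K : Set (EuclideanSpace ℝ (Fin d))) := by
    intro x hx
    simp only [Set.mem_setOf_eq, dist_eq_norm] at hx
    have hsq : ‖x - a‖ ^ 2 = ‖x - b‖ ^ 2 := by rw [hx]
    rw [norm_sub_sq_real, norm_sub_sq_real] at hsq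
    have hinner : ⟪x, w⟫ = r := by
      simp only [hw, hr, inner_sub_right]
      linarith
    simp only [Set.mem_preimage, SetLike.mem_coe, hK,
      Submodule.mem_orthogonal_singleton_iff_inner_right]
    rw [inner_add_right, inner_neg_right, hx₀, inner_smul_right, real_inner_comm x w, hinner]
    have : ⟪w, w⟫ ≠ 0 := fun h => hw0 (inner_self_eq_zero.mp h)
    rw [div_mul_cancel₀ _ this]; ring
  refine measure_mono_null hsub ?_
  rw [measure_preimage_add_right]
  exact Measure.addHaar_submodule volume K hKtop

private lemma iInf_dist_bound [NeZero k] (g h : Fin k → ℝ) (C : ℝ)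
    (hg : ∀ j, 0 ≤ g j) (hh : ∀ j, 0 ≤ h j) (hb : ∀ j, |g j - h j| ≤ C) :
    |(⨅ j, g j) - ⨅ j, h j| ≤ C := by
  have hbd : ∀ (g : Fin k → ℝ), (∀ j, 0 ≤ g j) → BddBelow (Set.range g) := by
    intro g hg; exact ⟨0, by rintro _ ⟨j, rfl⟩; exact hg j⟩
  rw [abs_sub_le_iff]
  constructor
  · have : ∀ j, (⨅ j, g j) - C ≤ h j := fun j => by
      have h1 := ciInf_le (hbd g hg) j
      have h2 := hb j
      rw [abs_sub_le_iff] at h2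
      linarith [h2.1]
    linarith [le_ciInf this]
  · have : ∀ j, (⨅ j, h j) - C ≤ g j := fun j => by
      have h1 := ciInf_le (hbd h hh) j
      have h2 := hb j
      rw [abs_sub_le_iff] at h2
      linarith [h2.2]
    linarith [le_ciInf this]

end aux

set_option maxHeartbeats 1000000 in
/-- Gradient of the k-means distortion: if `X` has continuous density `f` with finite
second moment, and the centers of the codebook `c` are pairwise distinct, then the
distortion `R(c) = E min_j ‖X - c_j‖²` is differentiable at `c` with partial gradients
`∂R/∂c_j = -2 ∫_{V_j(c)} (x - c_j) f(x) dx`, expressed via directional derivatives over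
the open Voronoi cells `V_j(c)`. -/
theorem stmt_18 (d k : ℕ) (hd : 1 ≤ d) (hk : 1 ≤ k)
    (f : EuclideanSpace ℝ (Fin d) → ℝ) (hfc : Continuous f) (hf0 : ∀ x, 0 ≤ f x)
    (hfint : Integrable f) (hf1 : ∫ x, f x = 1)
    (hmom : Integrable fun x : EuclideanSpace ℝ (Fin d) => ‖x‖ ^ 2 * f x)
    (R : (Fin k → EuclideanSpace ℝ (Fin d)) → ℝ)
    (hR : ∀ c : Fin k → EuclideanSpace ℝ (Fin d),
      R c = ∫ x, (⨅ j, ‖x - c j‖ ^ 2) * f x)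
    (c : Fin k → EuclideanSpace ℝ (Fin d))
    (hdist : ∀ i j : Fin k, i ≠ j → c i ≠ c j) :
    DifferentiableAt ℝ R c ∧
      ∀ (j : Fin k) (v : EuclideanSpace ℝ (Fin d)),
        HasDerivAt (fun t : ℝ => R (Function.update c j (c j + t • v)))
          (∫ x in {x : EuclideanSpace ℝ (Fin d) |
              ∀ u : Fin k, u ≠ j → dist x (c j) < dist x (c u)},
            (-2 * ⟪x - c j, v⟫) * f x) 0 := by
  haveI : NeZero k := ⟨by omega⟩
  haveI : Nonempty (Fin k) := ⟨⟨0, hk⟩⟩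
  have hbd : ∀ (g : Fin k → ℝ), (∀ j, 0 ≤ g j) → BddBelow (Set.range g) := by
    intro g hg; exact ⟨0, by rintro _ ⟨j, rfl⟩; exact hg j⟩
  set V : Fin k → Set (EuclideanSpace ℝ (Fin d)) :=
    fun j => {x | ∀ u : Fin k, u ≠ j → dist x (c j) < dist x (c u)} with hV
  have hVopen : ∀ j, IsOpen (V j) := by
    intro j
    have : V j = ⋂ u, ⋂ (_ : u ≠ j), {x | dist x (c j) < dist x (c u)} := by
      ext x; simp [hV]
    rw [this]
    refine isOpen_iInter_of_finite fun u => isOpen_iInter_of_finite fun hu => ?_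
    exact isOpen_lt (continuous_id.dist continuous_const) (continuous_id.dist continuous_const)
  have hVdisj : ∀ {i j : Fin k}, i ≠ j → ∀ {x}, x ∈ V i → x ∈ V j → False := by
    intro i j hij x hxi hxj
    exact lt_asymm (hxi j (Ne.symm hij)) (hxj i hij)
  have hae : ∀ᵐ x : EuclideanSpace ℝ (Fin d), ∃ j, x ∈ V j := by
    rw [MeasureTheory.ae_iff]
    have hN : volume (⋃ i, ⋃ j, ⋃ (_ : i ≠ j),
        {x : EuclideanSpace ℝ (Fin d) | dist x (c i) = dist x (c j)}) = 0 :=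
      measure_iUnion_null fun i => measure_iUnion_null fun j =>
        measure_iUnion_null fun hij => bisector_null _ _ (hdist i j hij)
    refine measure_mono_null ?_ hN
    intro x hx
    simp only [Set.mem_setOf_eq, not_exists] at hx
    obtain ⟨j₀, -, hmin⟩ := Finset.exists_min_image Finset.univ
      (fun u => dist x (c u)) Finset.univ_nonempty
    have hx0 := hx j₀
    rw [hV] at hx0
    simp only [Set.mem_setOf_eq, not_forall] at hx0
    obtain ⟨u, hu, hle⟩ := hx0
    have heq : dist x (c j₀) = dist x (c u) :=
      le_antisymm (hmin u (Finset.mem_univ u)) (not_lt.mp hle)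
    simp only [Set.mem_iUnion]
    exact ⟨j₀, u, Ne.symm hu, heq⟩
  -- the candidate derivative
  set L : Fin k → EuclideanSpace ℝ (Fin d) →
      ((Fin k → EuclideanSpace ℝ (Fin d)) →L[ℝ] ℝ) :=
    fun j y => (-2 * f y) • ((innerSL ℝ (y - c j)).comp
      (ContinuousLinearMap.proj j)) with hL
  set F' : EuclideanSpace ℝ (Fin d) → ((Fin k → EuclideanSpace ℝ (Fin d)) →L[ℝ] ℝ) :=
    fun x => ∑ j, Set.indicator (V j) (L j) x with hF'
  have hLcont : ∀ j, Continuous (L j) := by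
    intro j
    rw [hL]
    refine (continuous_const.mul hfc).smul ?_
    exact Continuous.clm_comp ((innerSL ℝ).continuous.comp
      (continuous_id.sub continuous_const)) continuous_const
  have hF'meas : AEStronglyMeasurable F' volume := by
    rw [hF']
    refine (Finset.stronglyMeasurable_fun_sum Finset.univ fun j _ => ?_).aestronglyMeasurable
    exact ((hLcont j).stronglyMeasurable).indicator (hVopen j).measurableSet
  -- measurability of the integrand
  have hm_meas : ∀ c' : Fin k → EuclideanSpace ℝ (Fin d),
      AEStronglyMeasurable (fun x : EuclideanSpace ℝ (Fin d) =>
        (⨅ j, ‖x - c' j‖ ^ 2) * f x) volume := by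
    intro c'
    refine (Measurable.mul ?_ hfc.measurable).aestronglyMeasurable
    exact Measurable.iInf fun j =>
      ((continuous_id.sub continuous_const).norm.pow 2).measurable
  -- the Lipschitz bound
  set bound : EuclideanSpace ℝ (Fin d) → ℝ :=
    fun x => (2 * ‖x‖ + (2 * ‖c‖ + 2)) * f x with hbound
  have hbound_int : Integrable bound volume := by
    have h1 : Integrable (fun x : EuclideanSpace ℝ (Fin d) => ‖x‖ * f x) volume := by
      refine Integrable.mono' (hfint.add hmom)
        ((continuous_norm.mul hfc).aestronglyMeasurable)
        (Filter.Eventually.of_forall fun x => ?_)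
      have h0 : (0:ℝ) ≤ ‖x‖ * f x := mul_nonneg (norm_nonneg x) (hf0 x)
      rw [Real.norm_eq_abs, abs_of_nonneg h0]
      simp only [Pi.add_apply]
      nlinarith [mul_nonneg (sq_nonneg (1 - ‖x‖)) (hf0 x), hf0 x, norm_nonneg x]
    have : bound = fun x => 2 * (‖x‖ * f x) + (2 * ‖c‖ + 2) * f x := by
      funext x; rw [hbound]; ring
    rw [this]
    exact (h1.const_mul 2).add (hfint.const_mul _)
  have h_lip : ∀ᵐ x : EuclideanSpace ℝ (Fin d),
      LipschitzOnWith (Real.nnabs (bound x))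
        (fun c' : Fin k → EuclideanSpace ℝ (Fin d) => (⨅ j, ‖x - c' j‖ ^ 2) * f x)
        (Metric.ball c 1) := by
    refine Filter.Eventually.of_forall fun x =>
      LipschitzOnWith.of_dist_le_mul fun a ha b hb => ?_
    have hnorm : ∀ (a : Fin k → EuclideanSpace ℝ (Fin d)), a ∈ Metric.ball c 1 →
        ∀ j, ‖x - a j‖ ≤ ‖x‖ + ‖c‖ + 1 := by
      intro a ha j
      have h1 : ‖a j - c j‖ ≤ ‖a - c‖ := norm_le_pi_norm (a - c) j
      have h2 : ‖a - c‖ < 1 := by rwa [Metric.mem_ball, dist_eq_norm] at ha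
      calc ‖x - a j‖ ≤ ‖x - c j‖ + ‖c j - a j‖ := norm_sub_le_norm_sub_add_norm_sub _ _ _
        _ ≤ (‖x‖ + ‖c j‖) + ‖a j - c j‖ := by
            rw [norm_sub_rev (c j)]
            exact add_le_add (norm_sub_le x (c j)) le_rfl
        _ ≤ ‖x‖ + ‖c‖ + 1 := by
            have := norm_le_pi_norm c j
            linarith
    have key : |(⨅ j, ‖x - a j‖ ^ 2) - ⨅ j, ‖x - b j‖ ^ 2| ≤
        (2 * ‖x‖ + (2 * ‖c‖ + 2)) * dist a b := by
      refine iInf_dist_bound _ _ _ (fun j => sq_nonneg _) (fun j => sq_nonneg _) fun j => ?_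
      have hd1 : |‖x - a j‖ - ‖x - b j‖| ≤ dist a b := by
        refine le_trans (abs_norm_sub_norm_le _ _) ?_
        have : (x - a j) - (x - b j) = (b - a) j := by
          simp [sub_sub_sub_cancel_left]
        rw [this, dist_eq_norm, norm_sub_rev]
        exact norm_le_pi_norm (b - a) j
      have hfac : ‖x - a j‖ ^ 2 - ‖x - b j‖ ^ 2 =
          (‖x - a j‖ - ‖x - b j‖) * (‖x - a j‖ + ‖x - b j‖) := by ring
      rw [hfac, abs_mul]
      have hsum : |‖x - a j‖ + ‖x - b j‖| ≤ 2 * ‖x‖ + (2 * ‖c‖ + 2) := by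
        rw [abs_of_nonneg (by positivity)]
        have := hnorm a ha j
        have := hnorm b hb j
        linarith
      calc |‖x - a j‖ - ‖x - b j‖| * |‖x - a j‖ + ‖x - b j‖|
          ≤ dist a b * (2 * ‖x‖ + (2 * ‖c‖ + 2)) :=
            mul_le_mul hd1 hsum (abs_nonneg _) dist_nonneg
        _ = (2 * ‖x‖ + (2 * ‖c‖ + 2)) * dist a b := by ring
    have hcoe : ((Real.nnabs (bound x)) : ℝ) = bound x := by
      have hbn : 0 ≤ bound x := by
        rw [hbound]; exact mul_nonneg (by positivity) (hf0 x)
      rw [Real.coe_nnabs, abs_of_nonneg hbn]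
    rw [Real.dist_eq, hcoe, hbound]
    have habs : |(⨅ j, ‖x - a j‖ ^ 2) * f x - (⨅ j, ‖x - b j‖ ^ 2) * f x| =
        |(⨅ j, ‖x - a j‖ ^ 2) - ⨅ j, ‖x - b j‖ ^ 2| * f x := by
      rw [← sub_mul, abs_mul, abs_of_nonneg (hf0 x)]
    rw [habs]
    calc |(⨅ j, ‖x - a j‖ ^ 2) - ⨅ j, ‖x - b j‖ ^ 2| * f x
        ≤ ((2 * ‖x‖ + (2 * ‖c‖ + 2)) * dist a b) * f x :=
          mul_le_mul_of_nonneg_right key (hf0 x)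
      _ = (2 * ‖x‖ + (2 * ‖c‖ + 2)) * f x * dist a b := by ring
  -- integrability at the base point
  have hF_int : Integrable (fun x : EuclideanSpace ℝ (Fin d) =>
      (⨅ j, ‖x - c j‖ ^ 2) * f x) volume := by
    set j₀ : Fin k := ⟨0, hk⟩
    refine Integrable.mono' ((hmom.const_mul 2).add (hfint.const_mul (2 * ‖c j₀‖ ^ 2)))
      (hm_meas c) (Filter.Eventually.of_forall fun x => ?_)
    have hm0 : (0:ℝ) ≤ ⨅ j, ‖x - c j‖ ^ 2 := le_ciInf fun j => sq_nonneg _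
    have hmle : (⨅ j, ‖x - c j‖ ^ 2) ≤ ‖x - c j₀‖ ^ 2 :=
      ciInf_le (hbd _ fun j => sq_nonneg _) j₀
    rw [Real.norm_eq_abs, abs_of_nonneg (mul_nonneg hm0 (hf0 x))]
    have hxc : ‖x - c j₀‖ ^ 2 ≤ 2 * ‖x‖ ^ 2 + 2 * ‖c j₀‖ ^ 2 := by
      have h1 : ‖x - c j₀‖ ≤ ‖x‖ + ‖c j₀‖ := norm_sub_le _ _
      have h2 : ‖x - c j₀‖ ^ 2 ≤ (‖x‖ + ‖c j₀‖) ^ 2 := by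
        nlinarith [norm_nonneg (x - c j₀)]
      nlinarith [sq_nonneg (‖x‖ - ‖c j₀‖)]
    simp only [Pi.add_apply]
    nlinarith [hf0 x, mul_le_mul_of_nonneg_right hmle (hf0 x),
      mul_le_mul_of_nonneg_right hxc (hf0 x)]
  -- a.e. differentiability of the integrand in the codebook
  have h_diff : ∀ᵐ x : EuclideanSpace ℝ (Fin d),
      HasFDerivAt (fun c' : Fin k → EuclideanSpace ℝ (Fin d) =>
        (⨅ j, ‖x - c' j‖ ^ 2) * f x) (F' x) c := by
    refine hae.mono fun x hx => ?_
    obtain ⟨j₀, hj₀⟩ := hx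
    -- the sum of indicators collapses to the `j₀` term
    have hF'x : F' x = L j₀ x := by
      simp only [hF']
      rw [Finset.sum_eq_single j₀]
      · exact Set.indicator_of_mem hj₀ _
      · intro u _ hu
        exact Set.indicator_of_notMem (fun hxu => (hVdisj hu hxu hj₀).elim) _
      · intro h; exact absurd (Finset.mem_univ j₀) h
    -- near `c`, the infimum is attained at `j₀`
    have hev : ∀ᶠ c' in nhds c,
        (⨅ j, ‖x - c' j‖ ^ 2) = ‖x - c' j₀‖ ^ 2 := by
      have hlt : ∀ u : Fin k, ∀ᶠ c' in nhds c,
          u ≠ j₀ → ‖x - c' j₀‖ < ‖x - c' u‖ := by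
        intro u
        by_cases hu : u = j₀
        · exact Filter.Eventually.of_forall fun _ h => absurd hu h
        · have hc1 : ContinuousAt (fun c' : Fin k → EuclideanSpace ℝ (Fin d) =>
              ‖x - c' j₀‖) c :=
            ((continuous_const.sub (continuous_apply j₀)).norm).continuousAt
          have hc2 : ContinuousAt (fun c' : Fin k → EuclideanSpace ℝ (Fin d) =>
              ‖x - c' u‖) c :=
            ((continuous_const.sub (continuous_apply u)).norm).continuousAt
          have hlt0 : ‖x - c j₀‖ < ‖x - c u‖ := by
            have := hj₀ u hu
            simpa [dist_eq_norm] using this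
          exact (hc1.eventually_lt hc2 hlt0).mono fun c' h _ => h
      refine (Filter.eventually_all.mpr hlt).mono fun c' h => ?_
      refine le_antisymm (ciInf_le (hbd _ fun j => sq_nonneg _) j₀) (le_ciInf fun u => ?_)
      by_cases hu : u = j₀
      · subst hu; exact le_rfl
      · exact pow_le_pow_left₀ (norm_nonneg _) (h u hu).le 2
    -- differentiability of the locally-representing function
    have hb : HasFDerivAt (fun c' : Fin k → EuclideanSpace ℝ (Fin d) => x - c' j₀)
        (0 - ContinuousLinearMap.proj j₀ :
          (Fin k → EuclideanSpace ℝ (Fin d)) →L[ℝ] EuclideanSpace ℝ (Fin d)) c :=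
      (hasFDerivAt_const x c).sub (hasFDerivAt_apply j₀ c)
    have h2 := hb.norm_sq
    have h3 := h2.mul_const (f x)
    have hLeq : L j₀ x = f x • ((2:ℕ) • (innerSL ℝ (x - c j₀)).comp
        (0 - ContinuousLinearMap.proj j₀)) := by
      ext w
      rw [hL]
      simp only [ContinuousLinearMap.smul_apply, ContinuousLinearMap.comp_apply,
        ContinuousLinearMap.sub_apply, ContinuousLinearMap.zero_apply,
        ContinuousLinearMap.proj_apply, innerSL_apply_apply, smul_eq_mul, nsmul_eq_mul,
        Nat.cast_ofNat, zero_sub, ContinuousLinearMap.neg_apply, inner_neg_right]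
      ring
    rw [hF'x, hLeq]
    refine HasFDerivAt.congr_of_eventuallyEq h3 ?_
    exact hev.mono fun c' h => by
      show (⨅ j, ‖x - c' j‖ ^ 2) * f x = ‖x - c' j₀‖ ^ 2 * f x
      rw [h]
  -- apply differentiation under the integral sign
  have key := hasFDerivAt_integral_of_dominated_loc_of_lip
    (F := fun (c' : Fin k → EuclideanSpace ℝ (Fin d)) (x : EuclideanSpace ℝ (Fin d)) =>
      (⨅ j, ‖x - c' j‖ ^ 2) * f x)
    (F' := F') (x₀ := c) (bound := bound) (μ := volume)
    (Metric.ball_mem_nhds c one_pos) (Filter.Eventually.of_forall hm_meas) hF_int hF'meas h_lip hbound_int h_diff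
  obtain ⟨hF'int, hD⟩ := key
  have hRR : R = fun c' : Fin k → EuclideanSpace ℝ (Fin d) =>
      ∫ x, (⨅ j, ‖x - c' j‖ ^ 2) * f x := funext hR
  constructor
  · rw [hRR]; exact hD.differentiableAt
  · intro j v
    rw [hRR]
    set w : Fin k → EuclideanSpace ℝ (Fin d) :=
      Function.update (0 : Fin k → EuclideanSpace ℝ (Fin d)) j v with hw
    have hφeq : (fun t : ℝ => Function.update c j (c j + t • v)) =
        fun t => c + t • w := by
      funext t; funext i
      by_cases hi : i = j
      · subst hi
        simp [hw, Function.update_self, Pi.add_apply, Pi.smul_apply]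
      · simp [hw, Function.update_of_ne hi, Pi.add_apply, Pi.smul_apply]
    have hφ : HasDerivAt (fun t : ℝ => Function.update c j (c j + t • v)) w 0 := by
      rw [hφeq]
      simpa using ((hasDerivAt_id (0:ℝ)).smul_const w).const_add c
    have hD0 : HasFDerivAt (fun c' : Fin k → EuclideanSpace ℝ (Fin d) =>
        ∫ x, (⨅ j, ‖x - c' j‖ ^ 2) * f x) (∫ x, F' x)
        ((fun t : ℝ => Function.update c j (c j + t • v)) 0) := by
      have h0 : (fun t : ℝ => Function.update c j (c j + t • v)) 0 = c := by
        funext i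
        by_cases hi : i = j
        · subst hi; simp
        · simp [Function.update_of_ne hi]
      rw [h0]; exact hD
    have hchain := hD0.comp_hasDerivAt 0 hφ
    have happ : (∫ x, F' x) w = ∫ x, (F' x) w :=
      ContinuousLinearMap.integral_apply hF'int w
    have hptw : ∀ x : EuclideanSpace ℝ (Fin d), (F' x) w =
        Set.indicator (V j) (fun y => (-2 * ⟪y - c j, v⟫) * f y) x := by
      intro x
      simp only [hF', ContinuousLinearMap.sum_apply]
      rw [Finset.sum_eq_single j]
      · by_cases hx : x ∈ V j
        · rw [Set.indicator_of_mem hx, Set.indicator_of_mem hx]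
          simp only [hL, ContinuousLinearMap.smul_apply, ContinuousLinearMap.comp_apply,
            ContinuousLinearMap.proj_apply, innerSL_apply_apply, smul_eq_mul]
          rw [hw, Function.update_self]
          ring
        · rw [Set.indicator_of_notMem hx, Set.indicator_of_notMem hx]
          simp
      · intro u _ hu
        by_cases hx : x ∈ V u
        · rw [Set.indicator_of_mem hx]
          simp only [hL, ContinuousLinearMap.smul_apply, ContinuousLinearMap.comp_apply,
            ContinuousLinearMap.proj_apply, innerSL_apply_apply, smul_eq_mul]
          rw [hw, Function.update_of_ne hu]
          simp
        · rw [Set.indicator_of_notMem hx]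
          simp
      · intro h; exact absurd (Finset.mem_univ j) h
    have hval : (∫ x, F' x) w =
        ∫ x in {x : EuclideanSpace ℝ (Fin d) |
          ∀ u : Fin k, u ≠ j → dist x (c j) < dist x (c u)},
        (-2 * ⟪x - c j, v⟫) * f x := by
      rw [happ]
      rw [show (fun x : EuclideanSpace ℝ (Fin d) => (F' x) w) =
        fun x => Set.indicator (V j) (fun y => (-2 * ⟪y - c j, v⟫) * f y) x
        from funext hptw]
      rw [integral_indicator (hVopen j).measurableSet]
    rw [← hval]
    exact hchain
end
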